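/- arXiv:1302.2273 — 5 statements merged into one kernel-verified Lean document; each statement's English description precedes it below -/
import Mathlib

section
/- Let A be a deterministic Moore machine with partial transition function over alphabet Π with distinguished letter b, outputs in a join-semilattice F, and let A_el be its elastification via the b-closure subset construction. Then for every word w on which A has a run ending in state q, A_el has a run on w ending in a set S with q ∈ S, and hence the output of A on w is ≤ the output of A_el on w in the semilattice order. -/
/-- A deterministic Moore machine with a partial transition function over alphabet `A`
and outputs in `F`. -/
structure PMoore (A F : Type) where
  Q : Type
  [dec : DecidableEq Q]
  [fin : Fintype Q]
  init : Q
  step : Q → A → Option Q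
  out : Q → F

attribute [instance] PMoore.dec PMoore.fin

/-- The (partial) run of the machine from a state on a word. -/
def PMoore.runFrom {A F : Type} (M : PMoore A F) : M.Q → List A → Option M.Q
  | q, [] => some q
  | q, a :: w => (M.step q a).bind fun q' => M.runFrom q' w

/-- The (partial) output of the machine on a word. -/
def PMoore.output {A F : Type} (M : PMoore A F) (w : List A) : Option F :=
  (M.runFrom M.init w).map M.out

/-- Elastic: every defined `b`-transition is a self-loop. -/
def PMoore.Elastic {A F : Type} (M : PMoore A F) (b : A) : Prop :=
  ∀ q q', M.step q b = some q' → q' = q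

/-- `R_b(S)`: the set of states reachable from `S` by a (possibly empty) sequence of
`b`-transitions. -/
noncomputable def PMoore.Rb {A F : Type} (M : PMoore A F) (b : A) (S : Finset M.Q) :
    Finset M.Q := by
  classical
  exact Finset.univ.filter fun q' =>
    ∃ q ∈ S, Relation.ReflTransGen (fun x y => M.step x b = some y) q q'

/-- The transition function of the elastification: the `b`-closure subset construction.
On `a ≠ b` a set `S` goes to `R_b(δ(S,a))` (undefined if `δ(S,a)` is empty); on `b`
the set `S` maps to itself provided some state of `S` has a `b`-transition. -/
noncomputable def PMoore.elStep {A F : Type} [DecidableEq A] (M : PMoore A F) (b : A)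
    (S : Finset M.Q) (a : A) : Option (Finset M.Q) := by
  classical
  exact if a = b then
    if ∃ q ∈ S, (M.step q b).isSome then some S else none
  else
    let T : Finset M.Q := Finset.univ.filter fun q' => ∃ q ∈ S, M.step q a = some q'
    if T.Nonempty then some (M.Rb b T) else none

/-- The run of the elastification from a set-state. -/
noncomputable def PMoore.elRunFrom {A F : Type} [DecidableEq A] (M : PMoore A F) (b : A) :
    Finset M.Q → List A → Option (Finset M.Q)
  | S, [] => some S
  | S, a :: w => (M.elStep b S a).bind fun S' => M.elRunFrom b S' w

/-- The run of the elastification on a word, starting from the initial set `R_b({q₀})`. -/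
noncomputable def PMoore.elRun {A F : Type} [DecidableEq A] (M : PMoore A F) (b : A)
    (w : List A) : Option (Finset M.Q) :=
  M.elRunFrom b (M.Rb b {M.init}) w

/-- The output of a set-state of the elastification: the join of the outputs of its
elements (junk value on the empty set). -/
noncomputable def PMoore.joinOut {A F : Type} [SemilatticeSup F] (M : PMoore A F)
    (S : Finset M.Q) : F :=
  if h : S.Nonempty then S.sup' h M.out else M.out M.init

/-- The (partial) output of the elastification on a word. -/
noncomputable def PMoore.elOutput {A F : Type} [DecidableEq A] [SemilatticeSup F]
    (M : PMoore A F) (b : A) (w : List A) : Option F :=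
  (M.elRun b w).map M.joinOut

lemma PMoore.mem_Rb {A F : Type} (M : PMoore A F) (b : A) (S : Finset M.Q) (q' : M.Q) :
    q' ∈ M.Rb b S ↔
      ∃ q ∈ S, Relation.ReflTransGen (fun x y => M.step x b = some y) q q' := by
  classical
  simp [PMoore.Rb]

/-- `S` is closed under `b`-transitions. -/
def PMoore.BClosed {A F : Type} (M : PMoore A F) (b : A) (S : Finset M.Q) : Prop :=
  ∀ x ∈ S, ∀ y, M.step x b = some y → y ∈ S

lemma PMoore.bClosed_Rb {A F : Type} (M : PMoore A F) (b : A) (S : Finset M.Q) :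
    M.BClosed b (M.Rb b S) := by
  intro x hx y hy
  rw [PMoore.mem_Rb] at hx ⊢
  obtain ⟨q, hq, hrel⟩ := hx
  exact ⟨q, hq, hrel.tail hy⟩

lemma PMoore.elRunFrom_aux {A F : Type} [DecidableEq A] (M : PMoore A F) (b : A) :
    ∀ (w : List A) (q q'' : M.Q) (S : Finset M.Q), q ∈ S → M.BClosed b S →
      M.runFrom q w = some q'' →
      ∃ S', M.elRunFrom b S w = some S' ∧ q'' ∈ S' ∧ M.BClosed b S' := by
  intro w
  induction w with
  | nil =>
    intro q q'' S hq hcl hrun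
    simp [PMoore.runFrom] at hrun
    exact ⟨S, rfl, hrun ▸ hq, hcl⟩
  | cons a w ih =>
    intro q q'' S hq hcl hrun
    simp only [PMoore.runFrom, Option.bind_eq_some_iff] at hrun
    obtain ⟨q', hstep, hrun'⟩ := hrun
    by_cases hab : a = b
    · subst hab
      have hsome : ∃ x ∈ S, (M.step x a).isSome := ⟨q, hq, by simp [hstep]⟩
      have hq' : q' ∈ S := hcl q hq q' hstep
      obtain ⟨S', h1, h2, h3⟩ := ih q' q'' S hq' hcl hrun'
      refine ⟨S', ?_, h2, h3⟩
      simp only [PMoore.elRunFrom, PMoore.elStep]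
      simp only [if_true, eq_self_iff_true, if_pos hsome]
      simpa using h1
    · classical
      set T : Finset M.Q := Finset.univ.filter fun q' => ∃ x ∈ S, M.step x a = some q'
        with hT
      have hq'T : q' ∈ T := by simp [hT]; exact ⟨q, hq, hstep⟩
      have hTne : T.Nonempty := ⟨q', hq'T⟩
      have hq'Rb : q' ∈ M.Rb b T := by
        rw [PMoore.mem_Rb]; exact ⟨q', hq'T, Relation.ReflTransGen.refl⟩
      obtain ⟨S', h1, h2, h3⟩ := ih q' q'' (M.Rb b T) hq'Rb (M.bClosed_Rb b T) hrun'
      refine ⟨S', ?_, h2, h3⟩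
      simp only [PMoore.elRunFrom, PMoore.elStep]
      rw [if_neg hab]
      simp only [← hT]
      rw [if_pos hTne]
      simpa using h1

/-- For every word `w` on which `A` has a run ending in state `q`, the elastification
`A_el` has a run on `w` ending in a set `S` with `q ∈ S`, and hence the output of `A`
on `w` is `≤` the output of `A_el` on `w`. -/
theorem stmt4 {A F : Type} [DecidableEq A] [SemilatticeSup F] (M : PMoore A F) (b : A) :
    ∀ (w : List A) (q : M.Q), M.runFrom M.init w = some q →
      ∃ S : Finset M.Q, M.elRun b w = some S ∧ q ∈ S ∧ M.out q ≤ M.joinOut S := by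
  intro w q hrun
  have hinit : M.init ∈ M.Rb b {M.init} := by
    rw [PMoore.mem_Rb]
    exact ⟨M.init, Finset.mem_singleton_self _, Relation.ReflTransGen.refl⟩
  obtain ⟨S, h1, h2, _⟩ :=
    M.elRunFrom_aux b w M.init q (M.Rb b {M.init}) hinit (M.bClosed_Rb b _) hrun
  refine ⟨S, h1, h2, ?_⟩
  have hne : S.Nonempty := ⟨q, h2⟩
  rw [PMoore.joinOut, dif_pos hne]
  exact Finset.le_sup' M.out h2
end

section
/- In the elastification A_el of a Moore machine A, if a word w leads A_el to a set state S, then for every state q ∈ S there exists a word w' leading A to q such that w and w' become equal after deleting all occurrences of the letter b; i.e., w and w' have the same b-free projection. -/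
lemma PMoore.runFrom_append {A F : Type} (M : PMoore A F) (p : M.Q) (u v : List A) :
    M.runFrom p (u ++ v) = (M.runFrom p u).bind (fun q => M.runFrom q v) := by
  induction u generalizing p with
  | nil => simp [PMoore.runFrom]
  | cons a u ih =>
    simp only [List.cons_append, PMoore.runFrom]
    cases M.step p a with
    | none => simp
    | some q => simp [ih q]

lemma PMoore.bword {A F : Type} (M : PMoore A F) (b : A) (p q : M.Q)
    (h : Relation.ReflTransGen (fun x y => M.step x b = some y) p q) :
    ∃ n, M.runFrom p (List.replicate n b) = some q := by
  induction h with
  | refl => exact ⟨0, rfl⟩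
  | tail _ hstep ih =>
    obtain ⟨n, hn⟩ := ih
    refine ⟨n + 1, ?_⟩
    rw [List.replicate_succ' (n := n), M.runFrom_append, hn]
    simp [PMoore.runFrom, hstep]

lemma PMoore.elKey {A F : Type} [DecidableEq A] (M : PMoore A F) (b : A)
    (w : List A) : ∀ (S0 S : Finset M.Q), M.elRunFrom b S0 w = some S →
    ∀ q ∈ S, ∃ p ∈ S0, ∃ u : List A, M.runFrom p u = some q ∧
      w.filter (fun a => decide (a ≠ b)) = u.filter (fun a => decide (a ≠ b)) := by
  induction w with
  | nil =>
    intro S0 S h q hq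
    simp only [PMoore.elRunFrom, Option.some.injEq] at h
    subst h
    exact ⟨q, hq, [], rfl, rfl⟩
  | cons a w ih =>
    intro S0 S h q hq
    simp only [PMoore.elRunFrom] at h
    cases hstep : M.elStep b S0 a with
    | none => rw [hstep] at h; simp at h
    | some S1 =>
      rw [hstep] at h
      rw [Option.bind_some] at h
      obtain ⟨p1, hp1, u, hu, hfu⟩ := ih S1 S h q hq
      by_cases hab : a = b
      · subst hab
        unfold PMoore.elStep at hstep
        rw [if_pos rfl] at hstep
        split at hstep
        · simp only [Option.some.injEq] at hstep
          subst hstep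
          refine ⟨p1, hp1, u, hu, ?_⟩
          simpa using hfu
        · exact absurd hstep (by simp)
      · unfold PMoore.elStep at hstep
        simp only [if_neg hab] at hstep
        split at hstep
        · simp only [Option.some.injEq] at hstep
          subst hstep
          unfold PMoore.Rb at hp1
          simp only [Finset.mem_filter, Finset.mem_univ, true_and] at hp1
          obtain ⟨t, ht, hrt⟩ := hp1
          obtain ⟨p, hp, hpa⟩ := ht
          obtain ⟨n, hn⟩ := M.bword b t p1 hrt
          refine ⟨p, hp, a :: List.replicate n b ++ u, ?_, ?_⟩
          · simp only [List.cons_append, PMoore.runFrom, hpa, Option.bind_some]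
            rw [M.runFrom_append, hn]
            simpa using hu
          · simp only [List.filter_cons, List.filter_append]
            have : (List.replicate n b).filter (fun a => decide (a ≠ b)) = [] := by
              simp [List.filter_eq_nil_iff, List.eq_of_mem_replicate]
            rw [this]
            simp only [ne_eq, decide_not] at hfu ⊢
            simp [hab, hfu]
        · exact absurd hstep (by simp)

/-- If a word `w` leads `A_el` to a set-state `S`, then for every `q ∈ S` there is a
word `w'` leading `A` to `q` such that `w` and `w'` have the same `b`-free projection. -/
theorem stmt5 {A F : Type} [DecidableEq A] (M : PMoore A F) (b : A)
    (w : List A) (S : Finset M.Q) (h : M.elRun b w = some S) :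
    ∀ q ∈ S, ∃ w' : List A, M.runFrom M.init w' = some q ∧
      w.filter (fun a => decide (a ≠ b)) = w'.filter (fun a => decide (a ≠ b)) := by
  intro q hq
  obtain ⟨p, hp, u, hu, hfu⟩ := M.elKey b w _ _ h q hq
  unfold PMoore.Rb at hp
  simp only [Finset.mem_filter, Finset.mem_univ, true_and, Finset.mem_singleton] at hp
  obtain ⟨r, hr, hrt⟩ := hp
  subst hr
  obtain ⟨n, hn⟩ := M.bword b _ p hrt
  refine ⟨List.replicate n b ++ u, ?_, ?_⟩
  · rw [M.runFrom_append, hn]; simpa using hu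
  · rw [List.filter_append]
    have : (List.replicate n b).filter (fun a => decide (a ≠ b)) = [] := by
      simp [List.filter_eq_nil_iff, List.eq_of_mem_replicate]
    rw [this, List.nil_append, hfu]
end

section
/- Minimality of elastification: Let A be a deterministic partial Moore machine over Π with distinguished letter b and outputs in a join-semilattice, and let A_el be its elastification. For any elastic Moore machine B such that for every word w the output of A on w is ≤ the output of B on w (whenever A's run is defined, B's run is defined and dominates), the output of A_el on every word w is ≤ the output of B on w. In particular, A_el computes the least elastic over-approximation of A. -/
namespace Stmt7Aux

variable {A F : Type}

/-- erase all occurrences of `b`. -/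
def eraseB (b : A) [DecidableEq A] : List A → List A
  | [] => []
  | a :: w => if a = b then eraseB b w else a :: eraseB b w

theorem eraseB_append [DecidableEq A] (b : A) (u v : List A) :
    eraseB b (u ++ v) = eraseB b u ++ eraseB b v := by
  induction u with
  | nil => rfl
  | cons a u ih =>
    by_cases h : a = b <;> simp [eraseB, h, ih]

theorem runFrom_append (M : PMoore A F) (q : M.Q) (u v : List A) :
    M.runFrom q (u ++ v) = (M.runFrom q u).bind fun q' => M.runFrom q' v := by
  induction u generalizing q with
  | nil => simp [PMoore.runFrom]
  | cons a u ih =>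
    simp only [List.cons_append, PMoore.runFrom]
    cases M.step q a with
    | none => rfl
    | some q' => simp [ih]

theorem elRunFrom_append [DecidableEq A] (M : PMoore A F) (b : A) (S : Finset M.Q)
    (u v : List A) :
    M.elRunFrom b S (u ++ v) = (M.elRunFrom b S u).bind fun S' => M.elRunFrom b S' v := by
  induction u generalizing S with
  | nil => simp [PMoore.elRunFrom]
  | cons a u ih =>
    simp only [List.cons_append, PMoore.elRunFrom]
    cases M.elStep b S a with
    | none => rfl
    | some S' => simp [ih]

/-- For an elastic machine, erasing `b`'s from a defined run keeps it defined with the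
same final state. -/
theorem runFrom_eraseB [DecidableEq A] {M : PMoore A F} {b : A} (hM : M.Elastic b) :
    ∀ (w : List A) (q q' : M.Q), M.runFrom q w = some q' →
      M.runFrom q (eraseB b w) = some q' := by
  intro w
  induction w with
  | nil => intro q q' h; simpa [PMoore.runFrom, eraseB] using h
  | cons a w ih =>
    intro q q' h
    simp only [PMoore.runFrom, Option.bind_eq_some_iff] at h
    obtain ⟨m, hm, hrun⟩ := h
    by_cases hab : a = b
    · subst hab
      have hmq : m = q := hM _ _ hm
      subst hmq
      simpa [eraseB] using ih _ q' hrun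
    · simp only [eraseB, if_neg hab, PMoore.runFrom, hm, Option.bind_some]
      exact ih m q' hrun

theorem bstar_run [DecidableEq A] {M : PMoore A F} {b : A} {q q' : M.Q}
    (h : Relation.ReflTransGen (fun x y => M.step x b = some y) q q') :
    ∃ v : List A, eraseB b v = [] ∧ M.runFrom q v = some q' := by
  induction h with
  | refl => exact ⟨[], rfl, rfl⟩
  | tail _ hlast ih =>
    obtain ⟨v, hv, hrun⟩ := ih
    refine ⟨v ++ [b], ?_, ?_⟩
    · simp [eraseB_append, hv, eraseB]
    · rw [runFrom_append, hrun]
      simp [PMoore.runFrom, hlast]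

theorem mem_Rb [DecidableEq A] {M : PMoore A F} {b : A} {S : Finset M.Q} {q' : M.Q} :
    q' ∈ M.Rb b S ↔ ∃ q ∈ S, Relation.ReflTransGen (fun x y => M.step x b = some y) q q' := by
  classical
  simp [PMoore.Rb]

theorem main_claim [DecidableEq A] [SemilatticeSup F] (M B : PMoore A F) (b : A)
    (hB : B.Elastic b)
    (hdom : ∀ (w : List A) (q : M.Q), M.runFrom M.init w = some q →
      ∃ p : B.Q, B.runFrom B.init w = some p ∧ M.out q ≤ B.out p) :
    ∀ (w : List A) (S : Finset M.Q), M.elRun b w = some S →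
      S.Nonempty ∧ (∃ p, B.runFrom B.init w = some p) ∧
      ∀ q ∈ S, ∃ v, eraseB b v = eraseB b w ∧ M.runFrom M.init v = some q := by
  intro w
  induction w using List.reverseRecOn with
  | nil =>
    intro S hS
    have hS' : S = M.Rb b {M.init} := by
      simpa [PMoore.elRun, PMoore.elRunFrom] using hS.symm
    subst hS'
    refine ⟨⟨M.init, ?_⟩, ⟨B.init, rfl⟩, ?_⟩
    · exact mem_Rb.mpr ⟨M.init, Finset.mem_singleton_self _, Relation.ReflTransGen.refl⟩
    · intro q hq
      obtain ⟨q0, hq0, hrt⟩ := mem_Rb.mp hq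
      rw [Finset.mem_singleton] at hq0; subst hq0
      obtain ⟨v, hv, hrun⟩ := bstar_run hrt
      exact ⟨v, by simp [hv, eraseB], hrun⟩
  | append_singleton u a ih =>
    intro S' hS'
    rw [PMoore.elRun, elRunFrom_append, Option.bind_eq_some_iff] at hS'
    obtain ⟨S, hS, hstep⟩ := hS'
    have hS : M.elRun b u = some S := hS
    simp only [PMoore.elRunFrom, Option.bind_eq_some_iff] at hstep
    obtain ⟨S'', hstep, hS''⟩ := hstep
    have hS''eq : S' = S'' := by simpa using hS''.symm
    subst hS''eq
    obtain ⟨hne, ⟨p, hp⟩, hwit⟩ := ih S hS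
    -- B's state after `u` equals its state after `eraseB b u`
    have hpE : B.runFrom B.init (eraseB b u) = some p := runFrom_eraseB hB u _ _ hp
    by_cases hab : a = b
    · subst hab
      rw [PMoore.elStep] at hstep
      rw [if_pos rfl] at hstep
      by_cases hex : ∃ q ∈ S, (M.step q a).isSome
      · rw [if_pos hex] at hstep
        have hSS : S = S' := by simpa using hstep
        subst hSS
        obtain ⟨q, hqS, hqb⟩ := hex
        obtain ⟨q2, hq2⟩ := Option.isSome_iff_exists.mp hqb
        obtain ⟨v, hv, hrun⟩ := hwit q hqS
        have hrun2 : M.runFrom M.init (v ++ [a]) = some q2 := by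
          rw [runFrom_append, hrun]
          simp [PMoore.runFrom, hq2]
        obtain ⟨p2, hp2, _⟩ := hdom _ _ hrun2
        rw [runFrom_append, Option.bind_eq_some_iff] at hp2
        obtain ⟨pv, hpv, hpstep⟩ := hp2
        simp only [PMoore.runFrom, Option.bind_eq_some_iff] at hpstep
        obtain ⟨p3, hp3, hp3'⟩ := hpstep
        have hpvE : B.runFrom B.init (eraseB a v) = some pv := runFrom_eraseB hB v _ _ hpv
        rw [hv, hpE] at hpvE
        have hpvp : p = pv := by simpa using hpvE
        subst hpvp
        refine ⟨hne, ⟨p, ?_⟩, ?_⟩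
        · rw [runFrom_append, hp]
          have := hB _ _ hp3
          simp [PMoore.runFrom, hp3, this]
        · intro q' hq'
          obtain ⟨v', hv', hrun'⟩ := hwit q' hq'
          exact ⟨v', by simp [hv', eraseB_append, eraseB], hrun'⟩
      · rw [if_neg hex] at hstep; exact absurd hstep (by simp)
    · rw [PMoore.elStep] at hstep
      rw [if_neg hab] at hstep
      set T : Finset M.Q := Finset.univ.filter fun q' => ∃ q ∈ S, M.step q a = some q' with hT
      by_cases hTne : T.Nonempty
      · rw [if_pos hTne] at hstep
        have hS'eq : S' = M.Rb b T := by simpa using hstep.symm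
        -- helper: reach any t ∈ T via a witness word
        have hreach : ∀ t ∈ T, ∃ v, eraseB b v = eraseB b u ++ [a] ∧
            M.runFrom M.init v = some t := by
          intro t ht
          rw [hT, Finset.mem_filter] at ht
          obtain ⟨-, q, hqS, hqa⟩ := ht
          obtain ⟨v, hv, hrun⟩ := hwit q hqS
          refine ⟨v ++ [a], ?_, ?_⟩
          · simp [eraseB_append, hv, eraseB, hab]
          · rw [runFrom_append, hrun]; simp [PMoore.runFrom, hqa]
        obtain ⟨t0, ht0⟩ := hTne
        obtain ⟨v0, hv0, hrun0⟩ := hreach t0 ht0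
        obtain ⟨p1, hp1, _⟩ := hdom _ _ hrun0
        have hp1E : B.runFrom B.init (eraseB b v0) = some p1 := runFrom_eraseB hB v0 _ _ hp1
        rw [hv0] at hp1E
        rw [runFrom_append, hpE, Option.bind_some] at hp1E
        simp only [PMoore.runFrom, Option.bind_eq_some_iff] at hp1E
        obtain ⟨p2, hp2, hp2'⟩ := hp1E
        have hp2'' : p1 = p2 := by simpa using hp2'.symm
        subst hp2''
        refine ⟨?_, ⟨p1, ?_⟩, ?_⟩
        · subst hS'eq
          exact ⟨t0, mem_Rb.mpr ⟨t0, ht0, Relation.ReflTransGen.refl⟩⟩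
        · rw [runFrom_append, hp]
          simp [PMoore.runFrom, hp2]
        · intro q' hq'
          subst hS'eq
          obtain ⟨t, htT, hrt⟩ := mem_Rb.mp hq'
          obtain ⟨v, hv, hrun⟩ := hreach t htT
          obtain ⟨v2, hv2, hrun2⟩ := bstar_run hrt
          refine ⟨v ++ v2, ?_, ?_⟩
          · simp [eraseB_append, hv, hv2, eraseB, hab]
          · rw [runFrom_append, hrun, Option.bind_some]; exact hrun2
      · rw [if_neg hTne] at hstep; exact absurd hstep (by simp)

end Stmt7Aux

/-- Minimality of elastification: if an elastic machine `B` pointwise dominates `A`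
(whenever `A`'s run is defined, `B`'s run is defined with output at least `A`'s), then
`B` pointwise dominates the elastification `A_el` as well; `A_el` computes the least
elastic over-approximation of `A`. -/
theorem stmt7 {A F : Type} [DecidableEq A] [SemilatticeSup F] (M B : PMoore A F) (b : A)
    (hB : B.Elastic b)
    (hdom : ∀ (w : List A) (q : M.Q), M.runFrom M.init w = some q →
      ∃ p : B.Q, B.runFrom B.init w = some p ∧ M.out q ≤ B.out p) :
    ∀ (w : List A) (S : Finset M.Q), M.elRun b w = some S →
      ∃ p : B.Q, B.runFrom B.init w = some p ∧ M.joinOut S ≤ B.out p := by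
  intro w S hS
  obtain ⟨hne, ⟨p, hp⟩, hwit⟩ := Stmt7Aux.main_claim M B b hB hdom w S hS
  refine ⟨p, hp, ?_⟩
  rw [PMoore.joinOut, dif_pos hne]
  refine Finset.sup'_le hne _ fun q hq => ?_
  obtain ⟨v, hv, hrun⟩ := hwit q hq
  obtain ⟨pq, hpq, hle⟩ := hdom v q hrun
  have h1 : B.runFrom B.init (Stmt7Aux.eraseB b v) = some pq :=
    Stmt7Aux.runFrom_eraseB hB v _ _ hpq
  have h2 : B.runFrom B.init (Stmt7Aux.eraseB b w) = some p :=
    Stmt7Aux.runFrom_eraseB hB w _ _ hp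
  rw [hv, h2] at h1
  have : pq = p := by simpa using h1.symm
  subst this
  exact hle
end

section
/- For every QDA A over a formula lattice with pairwise inequivalent formulas, there is a unique minimal QDA A' (unique up to isomorphism) that accepts the same set of valuation words, and A' is the minimal Moore machine computing the function from symbolic words to formulas induced by A. -/
/-- A quantified data automaton (QDA), viewed as a deterministic total Moore machine
over a symbolic alphabet `P`, outputting data formulas from a lattice carrier `F`. -/
structure QDA (P F : Type) where
  Q : Type
  [fin : Fintype Q]
  init : Q
  step : Q → P → Q
  out : Q → F

attribute [instance] QDA.fin

/-- The extended transition function on symbolic words. -/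
def QDA.run {P F : Type} (A : QDA P F) : A.Q → List P → A.Q
  | q, [] => q
  | q, a :: w => A.run (A.step q a) w

/-- The language of valuation words of a QDA: a valuation word consists of a symbolic
word `u` together with data values `ρ` for the quantified variables `Y`; it is accepted
iff `ρ` satisfies the formula output at the state reached on `u` (`sat` is the
satisfaction relation of the formula lattice). -/
def QDA.Lval {P F Y D : Type} (sat : F → (Y → D) → Prop) (A : QDA P F) :
    Set (List P × (Y → D)) :=
  {v | sat (A.out (A.run A.init v.1)) v.2}

theorem QDA.run_append {P F : Type} (A : QDA P F) (q : A.Q) (u v : List P) :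
    A.run q (u ++ v) = A.run (A.run q u) v := by
  induction u generalizing q with
  | nil => rfl
  | cons a u ih => exact ih (A.step q a)

/-- residual function of a state -/
def QDA.res {P F : Type} (A : QDA P F) (q : A.Q) : List P → F :=
  fun w => A.out (A.run q w)

def minQ {P F : Type} (A : QDA P F) : Type :=
  {g : List P → F // ∃ u, g = A.res (A.run A.init u)}

noncomputable instance minQ.fintype {P F : Type} (A : QDA P F) : Fintype (minQ A) :=
  Set.Finite.fintype <| (Set.finite_range A.res).subset (by rintro g ⟨u, rfl⟩; exact ⟨_, rfl⟩)

noncomputable def minQDA {P F : Type} (A : QDA P F) : QDA P F where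
  Q := minQ A
  fin := minQ.fintype A
  init := ⟨A.res A.init, [], rfl⟩
  step := fun g a => ⟨fun w => g.1 (a :: w), by
    obtain ⟨u, hu⟩ := g.2
    refine ⟨u ++ [a], ?_⟩
    funext w
    simp only [hu, QDA.res, QDA.run_append]
    rfl⟩
  out := fun g => g.1 []

theorem minrun {P F : Type} (A : QDA P F) (g : (minQDA A).Q) (w : List P) :
    ((minQDA A).run g w).1 = fun w' => g.1 (w ++ w') := by
  induction w generalizing g with
  | nil => rfl
  | cons a w ih =>
    show ((minQDA A).run ((minQDA A).step g a) w).1 = _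
    rw [ih]
    rfl

theorem mincomp {P F : Type} (A : QDA P F) (u : List P) :
    (minQDA A).out ((minQDA A).run (minQDA A).init u) = A.out (A.run A.init u) := by
  show ((minQDA A).run (minQDA A).init u).1 [] = _
  rw [minrun]
  simp [minQDA, QDA.res]

theorem lval_iff {P F Y D : Type} (sat : F → (Y → D) → Prop)
    (hineq : ∀ α β : F, (∀ ρ : Y → D, sat α ρ ↔ sat β ρ) → α = β)
    (A B : QDA P F) :
    QDA.Lval sat B = QDA.Lval sat A ↔
      ∀ u : List P, B.out (B.run B.init u) = A.out (A.run A.init u) := by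
  constructor
  · intro h u
    apply hineq
    intro ρ
    exact Set.ext_iff.mp h (u, ρ)
  · intro h
    ext ⟨u, ρ⟩
    simp [QDA.Lval, h u]

noncomputable def phi {P F : Type} (A B : QDA P F) : minQ A → B.Q :=
  fun g => B.run B.init g.2.choose

theorem phi_spec {P F : Type} (A B : QDA P F)
    (hB : ∀ u, B.out (B.run B.init u) = A.out (A.run A.init u)) (g : minQ A) :
    B.res (phi A B g) = g.1 := by
  funext w
  have hu := g.2.choose_spec
  rw [hu]
  simp only [phi, QDA.res, ← QDA.run_append, hB]

theorem phi_inj {P F : Type} (A B : QDA P F)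
    (hB : ∀ u, B.out (B.run B.init u) = A.out (A.run A.init u)) :
    Function.Injective (phi A B) := by
  intro g1 g2 h
  apply Subtype.ext
  rw [← phi_spec A B hB g1, ← phi_spec A B hB g2, h]

/-- For every QDA `A` over a lattice of pairwise inequivalent formulas, there is a
minimal QDA `A'`, unique up to isomorphism, accepting the same valuation words; `A'` is
the minimal Moore machine computing the symbolic-word-to-formula function induced
by `A`. -/
theorem stmt14 {P F Y D : Type} (sat : F → (Y → D) → Prop)
    (hineq : ∀ α β : F, (∀ ρ : Y → D, sat α ρ ↔ sat β ρ) → α = β)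
    (A : QDA P F) :
    ∃ A' : QDA P F,
      -- `A'` accepts the same valuation words as `A`
      QDA.Lval sat A' = QDA.Lval sat A ∧
      -- `A'` is minimal among such QDAs
      (∀ B : QDA P F, QDA.Lval sat B = QDA.Lval sat A →
        Fintype.card A'.Q ≤ Fintype.card B.Q) ∧
      -- `A'` is unique up to isomorphism among minimal such QDAs
      (∀ B : QDA P F, QDA.Lval sat B = QDA.Lval sat A →
        (∀ C : QDA P F, QDA.Lval sat C = QDA.Lval sat A →
          Fintype.card B.Q ≤ Fintype.card C.Q) →
        ∃ e : A'.Q ≃ B.Q,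
          e A'.init = B.init ∧
          (∀ q a, e (A'.step q a) = B.step (e q) a) ∧
          (∀ q, B.out (e q) = A'.out q)) ∧
      -- `A'` computes the symbolic-word-to-formula function induced by `A` ...
      (∀ u : List P, A'.out (A'.run A'.init u) = A.out (A.run A.init u)) ∧
      -- ... and is the minimal Moore machine computing this function
      (∀ B : QDA P F,
        (∀ u : List P, B.out (B.run B.init u) = A.out (A.run A.init u)) →
        Fintype.card A'.Q ≤ Fintype.card B.Q) := by

  refine ⟨minQDA A, ?_, ?_, ?_, mincomp A, ?_⟩
  · exact (lval_iff sat hineq A (minQDA A)).mpr (mincomp A)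
  · intro B hBL
    exact Fintype.card_le_of_injective _ (phi_inj A B ((lval_iff sat hineq A B).mp hBL))
  · intro B hBL hBmin
    have hB := (lval_iff sat hineq A B).mp hBL
    have hcard : Fintype.card (minQDA A).Q = Fintype.card B.Q := by
      refine le_antisymm (Fintype.card_le_of_injective _ (phi_inj A B hB)) ?_
      exact hBmin (minQDA A) ((lval_iff sat hineq A (minQDA A)).mpr (mincomp A))
    have hbij : Function.Bijective (phi A B) :=
      (Fintype.bijective_iff_injective_and_card _).mpr ⟨phi_inj A B hB, hcard⟩
    -- residual map of B is injective
    have hresinj : ∀ p p' : B.Q, B.res p = B.res p' → p = p' := by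
      intro p p' h
      obtain ⟨g, rfl⟩ := hbij.2 p
      obtain ⟨g', rfl⟩ := hbij.2 p'
      have : g = g' := Subtype.ext (by rw [← phi_spec A B hB g, ← phi_spec A B hB g', h])
      rw [this]
    refine ⟨Equiv.ofBijective _ hbij, ?_, ?_, ?_⟩
    · apply hresinj
      erw [Equiv.ofBijective_apply, phi_spec A B hB]
      funext w
      exact (hB w).symm
    · intro g a
      apply hresinj
      erw [Equiv.ofBijective_apply, phi_spec A B hB]
      funext w
      show ((minQDA A).step g a).1 w = B.out (B.run (B.step (phi A B g) a) w)
      show g.1 (a :: w) = B.out (B.run (phi A B g) (a :: w))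
      erw [show B.out (B.run (phi A B g) (a :: w)) = B.res (phi A B g) (a :: w) from rfl,
        phi_spec A B hB]
    · intro g
      show B.res (phi A B g) [] = g.1 []
      erw [phi_spec A B hB]
  · intro B hB
    exact Fintype.card_le_of_injective _ (phi_inj A B hB)
end

section
/- Angluin-style learning with a formula-valued observation table: if T : (S ∪ SΣ)·E → Γ is a closed and consistent observation table for a target function f : Σ* → Γ (with S prefix-closed, E suffix-closed, ε ∈ S ∩ E, and T(u·e) = f(u·e) for all entries), then the hypothesis Moore machine constructed from the table—with states the distinct rows of S, transitions given by row(u·a), initial state row(ε), and output T(u·ε)—is well defined and agrees with f on all words in (S ∪ SΣ)·E. -/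
/-- A deterministic finite Moore machine over input alphabet `A` with outputs in `G`. -/
structure Moore (A G : Type) where
  Q : Type
  [fin : Fintype Q]
  init : Q
  step : Q → A → Q
  out : Q → G

attribute [instance] Moore.fin

/-- The extended transition function. -/
def Moore.run {A G : Type} (M : Moore A G) : M.Q → List A → M.Q
  | q, [] => q
  | q, a :: w => M.run (M.step q a) w

/-- `M` computes the function `f : A* → G`. -/
def Moore.Computes {A G : Type} (M : Moore A G) (f : List A → G) : Prop :=
  ∀ w, f w = M.out (M.run M.init w)

/-- Rows of the observation table agree: `row(u) = row(u')` means the target function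
agrees on `u·e` and `u'·e` for every suffix `e ∈ E`. -/
def RowEq {A G : Type} (f : List A → G) (E : Set (List A)) (u u' : List A) : Prop :=
  ∀ e ∈ E, f (u ++ e) = f (u' ++ e)


def rowSetoid {A G : Type} (f : List A → G) (S E : Set (List A)) : Setoid S where
  r u v := RowEq f E u v
  iseqv := ⟨fun _ _ _ => rfl, fun h e he => (h e he).symm,
    fun h1 h2 e he => (h1 e he).trans (h2 e he)⟩

theorem Moore.run_append {A G : Type} (M : Moore A G) (q : M.Q) (w1 w2 : List A) :
    M.run q (w1 ++ w2) = M.run (M.run q w1) w2 := by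
  induction w1 generalizing q with
  | nil => rfl
  | cons a w ih => simp [Moore.run, ih]

/-- Angluin-style learning with an observation table: from a closed and consistent
observation table for `f` (with `S` prefix-closed, `E` suffix-closed, `ε ∈ S ∩ E`, and
entries given by `f`), the hypothesis Moore machine — states the distinct rows of `S`,
transitions given by `row(u·a)`, initial state `row(ε)`, output `T(u·ε) = f u` — is
well defined and agrees with `f` on all words in `(S ∪ SΣ)·E`. -/
theorem stmt17 {A G : Type} (f : List A → G) (S E : Set (List A))
    (hSfin : S.Finite) (hEfin : E.Finite)
    (hSpre : ∀ u v : List A, u ++ v ∈ S → u ∈ S)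
    (hEsuf : ∀ u v : List A, u ++ v ∈ E → v ∈ E)
    (hεS : ([] : List A) ∈ S) (hεE : ([] : List A) ∈ E)
    (hclosed : ∀ u ∈ S, ∀ a : A, ∃ u' ∈ S, RowEq f E (u ++ [a]) u')
    (hconsistent : ∀ u ∈ S, ∀ u' ∈ S, RowEq f E u u' →
      ∀ a : A, RowEq f E (u ++ [a]) (u' ++ [a])) :
    ∃ (H : Moore A G) (st : List A → H.Q),
      -- the states are exactly the distinct rows of elements of `S`
      (∀ u ∈ S, ∀ u' ∈ S, (st u = st u' ↔ RowEq f E u u')) ∧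
      (∀ q : H.Q, ∃ u ∈ S, st u = q) ∧
      -- initial state is `row(ε)`
      H.init = st [] ∧
      -- transitions are given by `row(u·a)`
      (∀ u ∈ S, ∀ a : A, ∀ u' ∈ S, RowEq f E (u ++ [a]) u' → H.step (st u) a = st u') ∧
      -- the output of `row(u)` is `T(u·ε) = f u`
      (∀ u ∈ S, H.out (st u) = f u) ∧
      -- the hypothesis agrees with `f` on all words of `(S ∪ SΣ)·E`
      (∀ u : List A, (u ∈ S ∨ ∃ v ∈ S, ∃ a : A, u = v ++ [a]) →
        ∀ e ∈ E, H.out (H.run H.init (u ++ e)) = f (u ++ e)) := by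
  classical
  haveI := hSfin.fintype
  haveI : DecidableEq (Quotient (rowSetoid f S E)) := Classical.decEq _
  set H : Moore A G :=
    { Q := Quotient (rowSetoid f S E)
      init := ⟦⟨[], hεS⟩⟧
      step := fun q a => Quotient.lift
        (fun u : S => (⟦⟨(hclosed u u.2 a).choose, (hclosed u u.2 a).choose_spec.1⟩⟧ :
          Quotient (rowSetoid f S E)))
        (by
          intro u v huv
          apply Quotient.sound
          intro e he
          have h1 := (hclosed u u.2 a).choose_spec.2
          have h2 := (hclosed v v.2 a).choose_spec.2
          have h3 := hconsistent u u.2 v v.2 huv a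
          exact ((h1 e he).symm.trans ((h3 e he).trans (h2 e he)))) q
      out := Quotient.lift (fun u : S => f u)
        (by
          intro u v huv
          have := huv [] hεE
          simpa using this) } with hH
  set st : List A → H.Q := fun u => if h : u ∈ S then ⟦⟨u, h⟩⟧ else ⟦⟨[], hεS⟩⟧ with hst
  have hstq : ∀ u (hu : u ∈ S), st u = ⟦⟨u, hu⟩⟧ := fun u hu => dif_pos hu
  have hstep : ∀ u (hu : u ∈ S) (a : A) u' (hu' : u' ∈ S), RowEq f E (u ++ [a]) u' →
      H.step ⟦⟨u, hu⟩⟧ a = ⟦⟨u', hu'⟩⟧ := by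
    intro u hu a u' hu' hrow
    show (⟦⟨(hclosed u hu a).choose, _⟩⟧ : Quotient (rowSetoid f S E)) = ⟦⟨u', hu'⟩⟧
    apply Quotient.sound
    intro e he
    have h1 := (hclosed u hu a).choose_spec.2
    exact (h1 e he).symm.trans (hrow e he)
  have hout : ∀ u (hu : u ∈ S), H.out ⟦⟨u, hu⟩⟧ = f u := fun u hu => rfl
  have hrun_out : ∀ e ∈ E, ∀ u (hu : u ∈ S), H.out (H.run ⟦⟨u, hu⟩⟧ e) = f (u ++ e) := by
    intro e
    induction e with
    | nil => intro _ u hu; simp [Moore.run, hout u hu]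
    | cons a e ih =>
      intro he u hu
      have he' : e ∈ E := hEsuf [a] e he
      obtain ⟨u', hu', hrow⟩ := hclosed u hu a
      have : H.run ⟦⟨u, hu⟩⟧ (a :: e) = H.run ⟦⟨u', hu'⟩⟧ e := by
        show H.run (H.step ⟦⟨u, hu⟩⟧ a) e = _
        rw [hstep u hu a u' hu' hrow]
      rw [this, ih he' u' hu']
      have := (hrow e he').symm
      simpa using this
  have hrun_init : ∀ u (hu : u ∈ S), H.run H.init u = ⟦⟨u, hu⟩⟧ := by
    intro u
    induction u using List.reverseRecOn with
    | nil => intro hu; rfl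
    | append_singleton v a ih =>
      intro hu
      have hv : v ∈ S := hSpre v [a] hu
      rw [Moore.run_append, ih hv]
      show H.step ⟦⟨v, hv⟩⟧ a = _
      exact hstep v hv a (v ++ [a]) hu (fun e he => rfl)
  refine ⟨H, st, ?_, ?_, ?_, ?_, ?_, ?_⟩
  · intro u hu u' hu'
    rw [hstq u hu, hstq u' hu', Quotient.eq]
    exact Iff.rfl
  · intro q
    obtain ⟨⟨u, hu⟩, rfl⟩ := Quotient.exists_rep q
    exact ⟨u, hu, hstq u hu⟩
  · rw [hstq [] hεS]
  · intro u hu a u' hu' hrow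
    rw [hstq u hu, hstq u' hu']
    exact hstep u hu a u' hu' hrow
  · intro u hu; rw [hstq u hu]; exact hout u hu
  · intro u hu e he
    rcases hu with hu | ⟨v, hv, a, rfl⟩
    · rw [Moore.run_append, hrun_init u hu, hrun_out e he u hu]
    · obtain ⟨u', hu', hrow⟩ := hclosed v hv a
      have h1 : H.run H.init (v ++ [a] ++ e) = H.run ⟦⟨u', hu'⟩⟧ e := by
        rw [List.append_assoc, Moore.run_append, hrun_init v hv]
        show H.run (H.step ⟦⟨v, hv⟩⟧ a) e = _
        rw [hstep v hv a u' hu' hrow]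
      rw [h1, hrun_out e he u' hu']
      exact (hrow e he).symm
end
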